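/- For fixed k ≥ 1, the shadow function ∂_{k−1} : ℕ → ℕ defined via the cascade (k-binomial) representation is non-decreasing: if n₁ > n₂ ≥ 1 then ∂_{k−1}(n₁) ≥ ∂_{k−1}(n₂). -/

import Mathlib

open Finset

/-- The value `C(a_k, k) + C(a_{k-1}, k-1) + ⋯ + C(a_i, i)` of a cascade representation,
where `l = [a_k, a_{k-1}, …, a_i]`. -/
def cascadeSum (k : ℕ) (l : List ℕ) : ℕ :=
  ∑ j ∈ Finset.range l.length, Nat.choose (l.getD j 0) (k - j)

/-- The shadow value `C(a_k, k-1) + C(a_{k-1}, k-2) + ⋯ + C(a_i, i-1)` of a cascade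
representation `l = [a_k, a_{k-1}, …, a_i]`. -/
def shadowSum (k : ℕ) (l : List ℕ) : ℕ :=
  ∑ j ∈ Finset.range l.length, Nat.choose (l.getD j 0) (k - j - 1)

/-- `l = [a_k, a_{k-1}, …, a_i]` is the cascade (`k`-binomial) representation of `n`:
`a_k > a_{k-1} > ⋯ > a_i ≥ i ≥ 1` and `n = C(a_k, k) + ⋯ + C(a_i, i)`. -/
def IsCascadeRep (k n : ℕ) (l : List ℕ) : Prop :=
  l ≠ [] ∧ l.Chain' (· > ·) ∧ l.length ≤ k ∧ k - l.length + 1 ≤ l.getLastD 0 ∧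
    n = cascadeSum k l

/-- Recursive version of `cascadeSum`. -/
def csum : ℕ → List ℕ → ℕ
  | _, [] => 0
  | k, a :: t => Nat.choose a k + csum (k - 1) t

lemma cascadeSum_eq_csum (l : List ℕ) : ∀ k, cascadeSum k l = csum k l := by
  induction l with
  | nil => intro k; simp [cascadeSum, csum]
  | cons a t ih =>
    intro k
    unfold cascadeSum csum
    rw [List.length_cons, Finset.sum_range_succ']
    simp only [List.getD_cons_succ, List.getD_cons_zero, Nat.sub_zero]
    rw [add_comm, ← ih (k - 1)]
    congr 1
    unfold cascadeSum
    exact Finset.sum_congr rfl fun j _ => by congr 1; omega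

lemma shadowSum_eq_csum (l : List ℕ) (k : ℕ) : shadowSum k l = csum (k - 1) l := by
  rw [← cascadeSum_eq_csum]
  unfold shadowSum cascadeSum
  apply Finset.sum_congr rfl
  intro j _
  congr 1
  omega

/-- A strictly decreasing list headed below `k` contributes `0`. -/
lemma csum_eq_zero (t : List ℕ) : ∀ b k, List.Chain' (· > ·) (b :: t) → b < k →
    csum k (b :: t) = 0 := by
  induction t with
  | nil => intro b k _ hb; simp [csum, Nat.choose_eq_zero_of_lt hb]
  | cons c t ih =>
    intro b k hch hb
    simp only [List.Chain', List.isChain_cons_cons] at hch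
    have h := ih c (k - 1) hch.2 (by omega)
    simp only [csum] at h ⊢
    rw [Nat.choose_eq_zero_of_lt hb]
    omega

/-- Non-strict bound: any strictly decreasing tail below `a` of length `≤ K + 1`
sums (with `csum K`) to at most `C(a, K)`. -/
lemma csum_le (l : List ℕ) : ∀ K a, List.Chain' (· > ·) (a :: l) → l.length ≤ K + 1 →
    csum K l ≤ Nat.choose a K := by
  induction l with
  | nil => intro K a _ _; simp [csum]
  | cons b t ih =>
    intro K a hch hlen
    simp only [List.Chain', List.isChain_cons_cons] at hch
    match K with
    | 0 =>
      have ht : t = [] := by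
        simp only [List.length_cons] at hlen; exact List.length_eq_zero_iff.mp (by omega)
      subst ht
      simp [csum]
    | K + 1 =>
      have h := ih K b hch.2 (by simp at hlen ⊢; omega)
      have hpascal : Nat.choose (b + 1) (K + 1) = Nat.choose b K + Nat.choose b (K + 1) :=
        Nat.choose_succ_succ b K
      have hmono := Nat.choose_le_choose (K + 1) (show b + 1 ≤ a by omega)
      simp only [csum, Nat.add_sub_cancel]
      omega

/-- Strict bound: under the extra hypotheses `l.length ≤ K` and `K ≤ a`. -/
lemma csum_lt (l : List ℕ) : ∀ K a, List.Chain' (· > ·) (a :: l) → l.length ≤ K → K ≤ a →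
    csum K l < Nat.choose a K := by
  induction l with
  | nil => intro K a _ _ hKa; simpa [csum] using Nat.choose_pos hKa
  | cons b t ih =>
    intro K a hch hlen hKa
    simp only [List.Chain', List.isChain_cons_cons] at hch
    match K with
    | 0 => simp at hlen
    | K + 1 =>
      by_cases hbK : b < K + 1
      · rw [csum_eq_zero t b (K + 1) hch.2 hbK]
        exact Nat.choose_pos hKa
      · have h := ih K b hch.2 (by simp at hlen ⊢; omega) (by omega)
        have hpascal : Nat.choose (b + 1) (K + 1) = Nat.choose b K + Nat.choose b (K + 1) :=
          Nat.choose_succ_succ b K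
        have hmono := Nat.choose_le_choose (K + 1) (show b + 1 ≤ a by omega)
        simp only [csum, Nat.add_sub_cancel]
        omega

lemma getLastD_irrel (l : List ℕ) (h : l ≠ []) (d d' : ℕ) : l.getLastD d = l.getLastD d' := by
  cases l with
  | nil => exact absurd rfl h
  | cons b t => rw [List.getLastD_cons, List.getLastD_cons]

/-- The head of a strictly decreasing list dominates the last element plus length. -/
lemma head_ge_last (t : List ℕ) : ∀ a, List.Chain' (· > ·) (a :: t) →
    t.getLastD a + t.length ≤ a := by
  induction t with
  | nil => intro a _; simp
  | cons b t ih =>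
    intro a hch
    simp only [List.Chain', List.isChain_cons_cons] at hch
    have h := ih b hch.2
    have hab := hch.1
    rw [List.getLastD_cons, List.length_cons]
    omega

lemma rep_head_ge (k n a : ℕ) (t : List ℕ) (h : IsCascadeRep k n (a :: t)) : k ≤ a := by
  obtain ⟨-, hch, hlen, hlast, -⟩ := h
  have h1 := head_ge_last t a hch
  have h2 : (a :: t).getLastD 0 = t.getLastD a := List.getLastD_cons
  rw [h2] at hlast
  simp only [List.length_cons] at hlen hlast
  omega

lemma rep_pos (k n : ℕ) (l : List ℕ) (h : IsCascadeRep k n l) : 1 ≤ n := by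
  obtain ⟨hne, hch, hlen, hlast, hsum⟩ := h
  match l with
  | [] => exact absurd rfl hne
  | a :: t =>
    have ha : k ≤ a := rep_head_ge k n a t ⟨hne, hch, hlen, hlast, hsum⟩
    rw [hsum, cascadeSum_eq_csum]
    simp only [csum]
    have := Nat.choose_pos ha
    omega

lemma rep_tail (k n a : ℕ) (t : List ℕ) (h : IsCascadeRep (k + 1) n (a :: t)) (ht : t ≠ []) :
    IsCascadeRep k (csum k t) t := by
  obtain ⟨-, hch, hlen, hlast, -⟩ := h
  have hcht : t.Chain' (· > ·) := hch.tail
  refine ⟨ht, hcht, by simp at hlen; omega, ?_, (cascadeSum_eq_csum t k).symm⟩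
  have h2 : (a :: t).getLastD 0 = t.getLastD 0 := by
    rw [List.getLastD_cons]
    exact getLastD_irrel t ht a 0
  rw [h2] at hlast
  simp only [List.length_cons] at hlast hlen
  omega

lemma main_mono : ∀ k n₁ n₂ : ℕ, ∀ l₁ l₂ : List ℕ, 1 ≤ k → n₂ < n₁ →
    IsCascadeRep k n₁ l₁ → IsCascadeRep k n₂ l₂ → csum (k - 1) l₂ ≤ csum (k - 1) l₁ := by
  intro k
  induction k with
  | zero => intro _ _ _ _ h; omega
  | succ K ih =>
    intro n₁ n₂ l₁ l₂ _ hlt h₁ h₂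
    match l₁, l₂ with
    | [], _ => exact absurd rfl h₁.1
    | _, [] => exact absurd rfl h₂.1
    | a₁ :: t₁, a₂ :: t₂ =>
      have ha₁ : K + 1 ≤ a₁ := rep_head_ge _ _ _ _ h₁
      have ha₂ : K + 1 ≤ a₂ := rep_head_ge _ _ _ _ h₂
      obtain ⟨-, hch₁, hlen₁, hlast₁, hsum₁⟩ := h₁
      obtain ⟨-, hch₂, hlen₂, hlast₂, hsum₂⟩ := h₂
      rw [cascadeSum_eq_csum] at hsum₁ hsum₂
      simp only [List.length_cons] at hlen₁ hlen₂
      simp only [Nat.add_sub_cancel]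
      -- values as csum
      have hv₁ : n₁ = Nat.choose a₁ (K + 1) + csum K t₁ := by simpa [csum] using hsum₁
      have hv₂ : n₂ = Nat.choose a₂ (K + 1) + csum K t₂ := by simpa [csum] using hsum₂
      rcases lt_trichotomy a₁ a₂ with hao | hae | hao
      · -- a₁ < a₂ : contradiction, since n₁ < C(a₁+1, K+1) ≤ C(a₂, K+1) ≤ n₂
        exfalso
        have hb : csum K t₁ < Nat.choose a₁ K :=
          csum_lt t₁ K a₁ hch₁ (by omega) (by omega)
        have hpascal : Nat.choose (a₁ + 1) (K + 1)
            = Nat.choose a₁ K + Nat.choose a₁ (K + 1) := Nat.choose_succ_succ a₁ K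
        have hmono := Nat.choose_le_choose (K + 1) (show a₁ + 1 ≤ a₂ by omega)
        omega
      · -- equal heads
        subst hae
        simp only [csum, Nat.add_sub_cancel]
        cases t₂ with
        | nil => simp [csum]
        | cons b₂ s₂ =>
          cases t₁ with
          | nil =>
            exfalso
            have hrep₂ := rep_tail K n₂ a₁ (b₂ :: s₂)
              ⟨by simp, hch₂, by simp only [List.length_cons] at hlen₂ ⊢; omega, hlast₂, by
                rw [cascadeSum_eq_csum]; exact hsum₂⟩ (by simp)
            have := rep_pos _ _ _ hrep₂
            simp [csum] at hv₁
            omega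
          | cons b₁ s₁ =>
            have hrep₁ := rep_tail K n₁ a₁ (b₁ :: s₁)
              ⟨by simp, hch₁, by simp only [List.length_cons] at hlen₁ ⊢; omega, hlast₁, by
                rw [cascadeSum_eq_csum]; exact hsum₁⟩ (by simp)
            have hrep₂ := rep_tail K n₂ a₁ (b₂ :: s₂)
              ⟨by simp, hch₂, by simp only [List.length_cons] at hlen₂ ⊢; omega, hlast₂, by
                rw [cascadeSum_eq_csum]; exact hsum₂⟩ (by simp)
            have hK1 : 1 ≤ K := by
              have := hrep₁.2.2.1; simp only [List.length_cons] at this; omega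
            have hlt' : csum K (b₂ :: s₂) < csum K (b₁ :: s₁) := by omega
            have := ih _ _ _ _ hK1 hlt' hrep₁ hrep₂
            omega
      · -- a₂ < a₁ : shadow₂ ≤ C(a₂+1, K) ≤ C(a₁, K) ≤ shadow₁
        have hb : csum K (a₂ :: t₂) ≤ Nat.choose (a₂ + 1) K := by
          apply csum_le (a₂ :: t₂) K (a₂ + 1)
          · simp only [List.Chain', List.isChain_cons_cons]; exact ⟨by omega, hch₂⟩
          · simp; omega
        have hmono := Nat.choose_le_choose K (show a₂ + 1 ≤ a₁ by omega)
        simp only [csum, Nat.add_sub_cancel] at hb ⊢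
        omega

/-- The shadow function `∂_{k-1}` defined via cascade representations is non-decreasing. -/
theorem shadow_monotone (k n₁ n₂ : ℕ) (hk : 1 ≤ k) (hn₂ : 1 ≤ n₂) (hlt : n₂ < n₁)
    (l₁ l₂ : List ℕ) (h₁ : IsCascadeRep k n₁ l₁) (h₂ : IsCascadeRep k n₂ l₂) :
    shadowSum k l₂ ≤ shadowSum k l₁ := by
  rw [shadowSum_eq_csum, shadowSum_eq_csum]
  exact main_mono k n₁ n₂ l₁ l₂ hk hlt h₁ h₂
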